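/- Let X be a real Banach space, f₀ ∈ S_{X*}, ε > 0, r > 0, and let C ⊆ X** be a subset of r·B_{X**} such that x**(f₀) > ε for every x** ∈ C. Then C is contained in the weak*-closure (in X** = (X*)*) of the set A = {x ∈ r·B_X : f₀(x) > ε}, where elements of X are identified with their canonical images in X**. -/

import Mathlib

open NormedSpace Metric Bornology Set

/-- Finite-dimensional approximation ("Goldstine" step): any `ψ` in the bidual with `‖ψ‖ ≤ r`
can be approximated on finitely many functionals by a point of the `r`-ball of `X`. -/
lemma finite_goldstine_aux (X : Type*) [NormedAddCommGroup X] [NormedSpace ℝ X]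
    {r : ℝ} (hr : 0 < r) (ψ : StrongDual ℝ (StrongDual ℝ X)) (hψ : ‖ψ‖ ≤ r)
    (t : Finset (StrongDual ℝ X)) {δ : ℝ} (hδ : 0 < δ) :
    ∃ x : X, ‖x‖ ≤ r ∧ ∀ f ∈ t, ‖f x - ψ f‖ < δ := by
  classical
  set L : X →ₗ[ℝ] (↑t → ℝ) :=
    LinearMap.pi (fun i : ↑t => ((i : StrongDual ℝ X) : X →ₗ[ℝ] ℝ)) with hL
  set S : Set (↑t → ℝ) := L '' closedBall 0 r with hS
  set c : ↑t → ℝ := fun i => ψ i with hcdef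
  have hc : c ∈ closure S := by
    by_contra hc
    obtain ⟨g, u, hgs, hgc⟩ := geometric_hahn_banach_closed_point
      (((convex_closedBall (0:X) r).linear_image L).closure) isClosed_closure hc
    set a : ↑t → ℝ := fun i => g (fun j => if i = j then 1 else 0) with ha
    set H : StrongDual ℝ X := ∑ i : ↑t, a i • (i : StrongDual ℝ X) with hHdef
    have hgsum : ∀ v : ↑t → ℝ, g v = ∑ i, v i * a i := by
      intro v
      have := LinearMap.pi_apply_eq_sum_univ (g : (↑t → ℝ) →ₗ[ℝ] ℝ) v
      simpa [a, smul_eq_mul] using this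
    have hH : ∀ x : X, H x = g (L x) := by
      intro x
      rw [hgsum]
      simp [H, ContinuousLinearMap.sum_apply, L, mul_comm]
    have hψH : ψ H = g c := by
      rw [hgsum]
      simp [H, map_sum, map_smul, smul_eq_mul, c, mul_comm]
    have hu0 : 0 < u := by
      have h0 : L 0 ∈ closure S := subset_closure ⟨0, by simp [hr.le], rfl⟩
      have := hgs _ h0
      simpa using this
    have hball : ∀ x : X, ‖x‖ ≤ r → |H x| ≤ u := by
      intro x hx
      have h1 : H x < u := by
        rw [hH]
        exact hgs _ (subset_closure ⟨x, by simpa using hx, rfl⟩)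
      have h2 : H (-x) < u := by
        rw [hH]
        exact hgs _ (subset_closure ⟨-x, by simpa using hx, rfl⟩)
      rw [map_neg] at h2
      rw [abs_le]; constructor <;> linarith
    have hHnorm : ‖H‖ ≤ u / r := by
      refine H.opNorm_le_bound (div_nonneg hu0.le hr.le) fun x => ?_
      rcases eq_or_ne x 0 with rfl | hx0
      · simp
      · have hxn : 0 < ‖x‖ := norm_pos_iff.2 hx0
        have hy : ‖(r / ‖x‖) • x‖ ≤ r := by
          rw [norm_smul, Real.norm_eq_abs, abs_of_pos (div_pos hr hxn)]
          rw [div_mul_cancel₀ _ hxn.ne']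
        have := hball _ hy
        rw [map_smul, smul_eq_mul, abs_mul, abs_of_pos (div_pos hr hxn)] at this
        rw [Real.norm_eq_abs, div_mul_eq_mul_div, le_div_iff₀ hr]
        calc |H x| * r = ‖x‖ * (r / ‖x‖ * |H x|) := by field_simp
          _ ≤ ‖x‖ * u := mul_le_mul_of_nonneg_left this hxn.le
          _ = u * ‖x‖ := mul_comm _ _
    have hfin : ψ H ≤ u := by
      calc ψ H ≤ ‖ψ H‖ := le_abs_self _
        _ ≤ ‖ψ‖ * ‖H‖ := ψ.le_opNorm H
        _ ≤ r * (u / r) := mul_le_mul hψ hHnorm (norm_nonneg _) hr.le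
        _ = u := by field_simp
    rw [hψH] at hfin
    linarith
  obtain ⟨y, ⟨x, hx, rfl⟩, hdist⟩ := Metric.mem_closure_iff.1 hc δ hδ
  refine ⟨x, by simpa using hx, fun f hf => ?_⟩
  have := (dist_pi_lt_iff hδ).1 hdist ⟨f, hf⟩
  rw [Real.dist_eq] at this
  have h' : |ψ f - f x| < δ := this
  rw [Real.norm_eq_abs, abs_sub_comm]
  exact h'

/-- The weak*-closure of a set in the bidual `X** = (X*)*`: the preimage of the closure
of its image in `WeakDual ℝ (Dual ℝ X)`. -/
noncomputable def wStarClosureBidual (X : Type*) [NormedAddCommGroup X] [NormedSpace ℝ X]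
    (S : Set (StrongDual ℝ (StrongDual ℝ X))) : Set (StrongDual ℝ (StrongDual ℝ X)) :=
  (⇑(StrongDual.toWeakDual (𝕜 := ℝ) (E := StrongDual ℝ X))) ⁻¹'
    closure ((⇑(StrongDual.toWeakDual (𝕜 := ℝ) (E := StrongDual ℝ X))) '' S)

theorem subset_wStarClosure_of_canonical_image
    (X : Type*) [NormedAddCommGroup X] [NormedSpace ℝ X] [CompleteSpace X]
    (f₀ : StrongDual ℝ X) (hf₀ : ‖f₀‖ = 1) (ε r : ℝ) (hε : 0 < ε) (hr : 0 < r)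
    (C : Set (StrongDual ℝ (StrongDual ℝ X))) (hCr : C ⊆ closedBall 0 r)
    (hCε : ∀ ψ ∈ C, ε < ψ f₀) :
    C ⊆ wStarClosureBidual X
      (inclusionInDoubleDual ℝ X '' {x : X | ‖x‖ ≤ r ∧ ε < f₀ x}) := by
  classical
  intro ψ hψ
  have hψr : ‖ψ‖ ≤ r := mem_closedBall_zero_iff (E := StrongDual ℝ (StrongDual ℝ X)) |>.1 (hCr hψ)
  have hψε : ε < ψ f₀ := hCε ψ hψ
  simp only [wStarClosureBidual, Set.mem_preimage]
  refine (mem_closure_iff_nhds_basis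
      ((LinearMap.weakBilin_withSeminorms (E := StrongDual ℝ (StrongDual ℝ X)) (F := StrongDual ℝ X)
        (topDualPairing ℝ (StrongDual ℝ X))).hasBasis_ball)).2 ?_
  rintro ⟨s, δ⟩ (hδ : 0 < δ)
  have hδ' : 0 < min δ (ψ f₀ - ε) := lt_min hδ (by linarith)
  obtain ⟨x, hxr, hxf⟩ := finite_goldstine_aux X hr ψ hψr (insert f₀ s) hδ'
  have hxε : ε < f₀ x := by
    have h1 := hxf f₀ (Finset.mem_insert_self _ _)
    rw [Real.norm_eq_abs] at h1
    have h2 : |f₀ x - ψ f₀| < ψ f₀ - ε := lt_of_lt_of_le h1 (min_le_right _ _)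
    have := (abs_lt.1 h2).1
    linarith
  refine ⟨StrongDual.toWeakDual (inclusionInDoubleDual ℝ X x),
    ⟨inclusionInDoubleDual ℝ X x, ⟨x, ⟨hxr, hxε⟩, rfl⟩, rfl⟩, ?_⟩
  refine (Seminorm.mem_ball (s.sup (LinearMap.toSeminormFamily (E := StrongDual ℝ (StrongDual ℝ X))
    (F := StrongDual ℝ X) (topDualPairing ℝ (StrongDual ℝ X))))).2 ?_
  refine Seminorm.finset_sup_apply_lt (p := LinearMap.toSeminormFamily
    (E := StrongDual ℝ (StrongDual ℝ X)) (F := StrongDual ℝ X) (topDualPairing ℝ (StrongDual ℝ X)))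
    hδ fun f hf => ?_
  have h1 := hxf f (Finset.mem_insert_of_mem hf)
  have h2 : ‖f x - ψ f‖ < δ := lt_of_lt_of_le h1 (min_le_left _ _)
  exact h2
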